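/- Integer Subset Sum correctness: Let S ⊆ ℤ be finite and l, u ∈ ℤ. Over the ordered semiring ℤ = (ℤ, +, ·, 0, 1), consider the AC-program P consisting of the facts s(x) ← for each x ∈ S, together with the two rules l ≤_ℤ ¬¬s(X) * (s(X) → in(X)) * X ← and u ≥_ℤ ¬¬s(X) * (s(X) → in(X)) * X ←, where X is a local variable ranging over ℤ. Then a set I of ground atoms is an equilibrium model of P if and only if I = {s(x) : x ∈ S} ∪ {in(x) : x ∈ S'} for some S' ⊆ S that is ⊆-minimal among subsets S'' ⊆ S with l ≤ Σ_{x ∈ S''} x ≤ u. -/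
import Mathlib


/-- The two worlds of HT logic. -/
inductive W : Type | H | T
deriving DecidableEq

/-- `W.le w w'` means `w' ≥ w` in the HT order (with `T ≥ H`). -/
def W.le : W → W → Prop
  | .H, _ => True
  | .T, w' => w' = .T

/-- Ground atoms of the subset-sum program: `s(x)` and `in(x)` for `x : ℤ`. -/
inductive SAtom : Type | sa (x : ℤ) | ina (x : ℤ)
deriving DecidableEq

/-- An HT-interpretation: a pair of sets of atoms with `h ⊆ t`. -/
structure HTI where
  h : Set SAtom
  t : Set SAtom
  sub : h ⊆ t

/-- The component of a pointed HT-interpretation at world `w`. -/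
def HTI.at (I : HTI) : W → Set SAtom
  | .H => I.h
  | .T => I.t

/-- Propositional σ-formulas over `SAtom` (fragment needed here). -/
inductive Fml : Type
  | bot
  | atom (a : SAtom)
  | impl (φ ψ : Fml)

/-- HT satisfaction. -/
def Fml.sat (I : HTI) : W → Fml → Prop
  | _, .bot => False
  | w, .atom a => a ∈ I.at w
  | w, .impl φ ψ => ∀ w', W.le w w' → (Fml.sat I w' φ → Fml.sat I w' ψ)

/-- `¬φ` is `φ → ⊥`. -/
def Fml.not (φ : Fml) : Fml := .impl φ .bot

open Classical in
/-- `⟦¬¬s(ξ) * (s(ξ) → in(ξ)) * ξ⟧_ℤ(I_w)` (each σ-formula contributes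
    `e_⊗ = 1` if satisfied and `e_⊕ = 0` otherwise). -/
noncomputable def term (I : HTI) (w : W) (ξ : ℤ) : ℤ :=
  (if Fml.sat I w (Fml.not (Fml.not (.atom (.sa ξ)))) then 1 else 0) *
    (if Fml.sat I w (.impl (.atom (.sa ξ)) (.atom (.ina ξ))) then 1 else 0) * ξ

/-- `⟦ΣX ¬¬s(X) * (s(X) → in(X)) * X⟧_ℤ(I_w)`, the local variable `X` ranging
    over `ℤ`:  the (finitary) sum of the term over its support. -/
noncomputable def sigmaVal (I : HTI) (w : W) : ℤ :=
  ∑ᶠ ξ : ℤ, term I w ξ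

/-- HT satisfaction of the program `P` consisting of the facts `s(x) ←` for
    `x ∈ S` and the two constraint-headed rules
    `l ≤_ℤ ¬¬s(X) * (s(X) → in(X)) * X ←` and `u ≥_ℤ ¬¬s(X) * (s(X) → in(X)) * X ←`
    (a head constraint `k ∼_ℤ α` is satisfied at `I_w` iff
    `k ∼ ⟦α⟧_ℤ(I_{w'})` for all `w' ≥ w`). -/
def progSat (S : Finset ℤ) (l u : ℤ) (I : HTI) (w : W) : Prop :=
  (∀ x ∈ S, SAtom.sa x ∈ I.at w) ∧
    (∀ w', W.le w w' → l ≤ sigmaVal I w') ∧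
    (∀ w', W.le w w' → sigmaVal I w' ≤ u)

/-- `J` is an equilibrium model of `P`. -/
def EqModel (S : Finset ℤ) (l u : ℤ) (J : Set SAtom) : Prop :=
  progSat S l u ⟨J, J, le_refl J⟩ .H ∧
    ∀ J' (h : J' ⊆ J), J' ≠ J → ¬ progSat S l u ⟨J', J, h⟩ .H

lemma sat_impl_H (I : HTI) (φ ψ : Fml) :
    Fml.sat I .H (.impl φ ψ) ↔
      (Fml.sat I .H φ → Fml.sat I .H ψ) ∧ (Fml.sat I .T φ → Fml.sat I .T ψ) := by
  constructor
  · intro h; exact ⟨h .H trivial, h .T trivial⟩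
  · rintro ⟨h1, h2⟩ w' _; cases w' <;> assumption

lemma sat_impl_T (I : HTI) (φ ψ : Fml) :
    Fml.sat I .T (.impl φ ψ) ↔ (Fml.sat I .T φ → Fml.sat I .T ψ) := by
  constructor
  · intro h; exact h .T rfl
  · intro h w' hw; cases w'
    · exact absurd hw (by simp [W.le])
    · exact h

lemma sat_atom (I : HTI) (w : W) (a : SAtom) : Fml.sat I w (.atom a) ↔ a ∈ I.at w := Iff.rfl

lemma sat_bot (I : HTI) (w : W) : ¬ Fml.sat I w .bot := fun h => h

lemma sat_notnot_T (I : HTI) (a : SAtom) :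
    Fml.sat I .T (Fml.not (Fml.not (.atom a))) ↔ a ∈ I.t := by
  simp only [Fml.not, sat_impl_T, sat_atom]
  show (((a ∈ I.at .T) → Fml.sat I .T .bot) → Fml.sat I .T .bot) ↔ a ∈ I.t
  simp only [Fml.sat, HTI.at]
  tauto

lemma sat_notnot_H (I : HTI) (a : SAtom) :
    Fml.sat I .H (Fml.not (Fml.not (.atom a))) ↔ a ∈ I.t := by
  simp only [Fml.not, sat_impl_H, sat_impl_T, sat_atom]
  show (((Fml.sat I .H (.atom a) → Fml.sat I .H .bot) ∧ (Fml.sat I .T (.atom a) → Fml.sat I .T .bot) → Fml.sat I .H .bot) ∧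
      ((Fml.sat I .T (.atom a) → Fml.sat I .T .bot) → Fml.sat I .T .bot)) ↔ a ∈ I.t
  simp only [Fml.sat, sat_atom, HTI.at]
  have := I.sub (a := a)
  tauto

open Classical in
lemma term_T (I : HTI) (ξ : ℤ) :
    term I .T ξ = if SAtom.sa ξ ∈ I.t ∧ SAtom.ina ξ ∈ I.t then ξ else 0 := by
  classical
  rw [term]
  by_cases hs : SAtom.sa ξ ∈ I.t <;> by_cases hi : SAtom.ina ξ ∈ I.t <;>
    simp [sat_notnot_T, sat_impl_T, sat_atom, HTI.at, hs, hi]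

open Classical in
lemma term_H (I : HTI) (ξ : ℤ) :
    term I .H ξ =
      if SAtom.sa ξ ∈ I.t ∧ SAtom.ina ξ ∈ I.t ∧ (SAtom.sa ξ ∈ I.h → SAtom.ina ξ ∈ I.h) then ξ
      else 0 := by
  classical
  rw [term]
  by_cases hs : SAtom.sa ξ ∈ I.t <;> by_cases hi : SAtom.ina ξ ∈ I.t <;>
    by_cases hsh : SAtom.sa ξ ∈ I.h <;> by_cases hih : SAtom.ina ξ ∈ I.h <;>
    simp [sat_notnot_H, sat_impl_H, sat_impl_T, sat_atom, HTI.at, hs, hi, hsh, hih]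

open Classical in
lemma sigma_eq_sum (I : HTI) (w : W) (C : Finset ℤ)
    (hterm : ∀ ξ, term I w ξ = if ξ ∈ C then ξ else 0) :
    sigmaVal I w = ∑ x ∈ C, x := by
  unfold sigmaVal
  rw [finsum_congr hterm]
  have h2 : ∀ ξ : ℤ, (if ξ ∈ C then ξ else 0) = Set.indicator (↑C) id ξ := by
    intro ξ; simp [Set.indicator]
  rw [finsum_congr h2, ← finsum_mem_def, finsum_mem_coe_finset]
  simp

lemma my_if_congr {α : Type*} {c₁ c₂ : Prop} {i₁ : Decidable c₁} {i₂ : Decidable c₂}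
    {a b : α} (h : c₁ ↔ c₂) : @ite α c₁ i₁ a b = @ite α c₂ i₂ a b := by
  cases i₁ <;> cases i₂ <;> simp_all

/-- **Integer Subset Sum correctness**: `I` is an equilibrium model of `P` iff
    `I = {s(x) : x ∈ S} ∪ {in(x) : x ∈ S'}` for some `S' ⊆ S` that is `⊆`-minimal
    among all `S'' ⊆ S` with `l ≤ Σ_{x ∈ S''} x ≤ u`. -/
theorem subset_sum_correctness (S : Finset ℤ) (l u : ℤ) (I : Set SAtom) :
    EqModel S l u I ↔
      ∃ S' : Finset ℤ, S' ⊆ S ∧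
        (l ≤ ∑ x ∈ S', x ∧ ∑ x ∈ S', x ≤ u) ∧
        (∀ S'' : Finset ℤ, S'' ⊆ S → S'' ⊆ S' →
          (l ≤ ∑ x ∈ S'', x ∧ ∑ x ∈ S'', x ≤ u) → S'' = S') ∧
        I = (fun x => SAtom.sa x) '' ↑S ∪ (fun x => SAtom.ina x) '' ↑S' := by
  classical
  constructor
  · rintro ⟨⟨hS, hL, hU⟩, hMin⟩
    have hSI : ∀ x ∈ S, SAtom.sa x ∈ I := hS
    have hLT : l ≤ sigmaVal ⟨I, I, le_refl I⟩ .T := hL .T trivial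
    have hUT : sigmaVal ⟨I, I, le_refl I⟩ .T ≤ u := hU .T trivial
    -- Step A : sa x ∈ I → x ∈ S
    have stepA : ∀ x : ℤ, SAtom.sa x ∈ I → x ∈ S := by
      intro x hx
      by_contra hxS
      set J' : Set SAtom := I \ {SAtom.sa x} with hJ'
      have hsub : J' ⊆ I := Set.diff_subset
      have hne : J' ≠ I := by
        intro h
        have : SAtom.sa x ∈ J' := h ▸ hx
        simp [hJ'] at this
      apply hMin J' hsub hne
      have key : ∀ w', sigmaVal ⟨J', I, hsub⟩ w' = sigmaVal ⟨I, I, le_refl I⟩ .T := by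
        intro w'
        cases w'
        · unfold sigmaVal
          apply finsum_congr
          intro ξ
          rw [term_H, term_T]
          refine my_if_congr ?_
          simp only [hJ', Set.mem_diff, Set.mem_singleton_iff]
          constructor
          · rintro ⟨h1, h2, _⟩; exact ⟨h1, h2⟩
          · rintro ⟨h1, h2⟩; exact ⟨h1, h2, fun _ => ⟨h2, by simp⟩⟩
        · unfold sigmaVal
          apply finsum_congr
          intro ξ
          rw [term_T, term_T]
      refine ⟨?_, ?_, ?_⟩
      · intro y hy
        show SAtom.sa y ∈ J'
        refine ⟨hSI y hy, ?_⟩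
        simp only [Set.mem_singleton_iff, SAtom.sa.injEq]
        rintro rfl
        exact hxS hy
      · intro w' _; rw [key w']; exact hLT
      · intro w' _; rw [key w']; exact hUT
    -- Step B : ina x ∈ I → x ∈ S
    have stepB : ∀ x : ℤ, SAtom.ina x ∈ I → x ∈ S := by
      intro x hx
      by_contra hxS
      set J' : Set SAtom := I \ {SAtom.ina x} with hJ'
      have hsub : J' ⊆ I := Set.diff_subset
      have hne : J' ≠ I := by
        intro h
        have : SAtom.ina x ∈ J' := h ▸ hx
        simp [hJ'] at this
      apply hMin J' hsub hne
      have key : ∀ w', sigmaVal ⟨J', I, hsub⟩ w' = sigmaVal ⟨I, I, le_refl I⟩ .T := by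
        intro w'
        cases w'
        · unfold sigmaVal
          apply finsum_congr
          intro ξ
          rw [term_H, term_T]
          refine my_if_congr ?_
          by_cases hξ : ξ = x
          · subst hξ
            have hns : SAtom.sa ξ ∉ I := fun h => hxS (stepA ξ h)
            simp [hns]
          · simp only [hJ', Set.mem_diff, Set.mem_singleton_iff]
            constructor
            · rintro ⟨h1, h2, _⟩; exact ⟨h1, h2⟩
            · rintro ⟨h1, h2⟩
              exact ⟨h1, h2, fun _ => ⟨h2, by simp [hξ]⟩⟩
        · unfold sigmaVal
          apply finsum_congr
          intro ξ
          rw [term_T, term_T]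
      refine ⟨?_, ?_, ?_⟩
      · intro y hy
        show SAtom.sa y ∈ J'
        exact ⟨hSI y hy, by simp⟩
      · intro w' _; rw [key w']; exact hLT
      · intro w' _; rw [key w']; exact hUT
    set S' : Finset ℤ := S.filter (fun x => SAtom.ina x ∈ I) with hS'def
    have hS'S : S' ⊆ S := Finset.filter_subset _ _
    have hmemS : ∀ ξ, SAtom.sa ξ ∈ I ↔ ξ ∈ S := fun ξ => ⟨stepA ξ, fun h => hSI ξ h⟩
    have hmemS' : ∀ ξ, SAtom.ina ξ ∈ I ↔ ξ ∈ S' := by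
      intro ξ
      constructor
      · intro h; exact Finset.mem_filter.2 ⟨stepB ξ h, h⟩
      · intro h; exact (Finset.mem_filter.1 h).2
    have hIeq : I = (fun x => SAtom.sa x) '' ↑S ∪ (fun x => SAtom.ina x) '' ↑S' := by
      ext a
      cases a with
      | sa x => simp [hmemS x]
      | ina x => simp [hmemS' x]
    have hsum : ∀ w, sigmaVal ⟨I, I, le_refl I⟩ w = ∑ x ∈ S', x := by
      intro w
      apply sigma_eq_sum
      intro ξ
      cases w
      · rw [term_H]
        refine my_if_congr ?_
        simp only [hmemS, hmemS']
        constructor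
        · rintro ⟨_, h2, _⟩; exact h2
        · intro h; exact ⟨hS'S h, h, fun _ => h⟩
      · rw [term_T]
        refine my_if_congr ?_
        simp only [hmemS, hmemS']
        constructor
        · rintro ⟨_, h2⟩; exact h2
        · intro h; exact ⟨hS'S h, h⟩
    have hl' : l ≤ ∑ x ∈ S', x := by rw [← hsum .T]; exact hLT
    have hu' : ∑ x ∈ S', x ≤ u := by rw [← hsum .T]; exact hUT
    refine ⟨S', hS'S, ⟨hl', hu'⟩, ?_, hIeq⟩
    intro S'' hsubS hsubS' ⟨hl'', hu''⟩
    set J' : Set SAtom := (fun x => SAtom.sa x) '' ↑S ∪ (fun x => SAtom.ina x) '' ↑S''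
      with hJ'def
    have memJ'sa : ∀ ξ, SAtom.sa ξ ∈ J' ↔ ξ ∈ S := by intro ξ; simp [hJ'def]
    have memJ'ina : ∀ ξ, SAtom.ina ξ ∈ J' ↔ ξ ∈ S'' := by intro ξ; simp [hJ'def]
    have hsub : J' ⊆ I := by
      intro a ha
      cases a with
      | sa x => exact (hmemS x).2 ((memJ'sa x).1 ha)
      | ina x => exact (hmemS' x).2 (hsubS' ((memJ'ina x).1 ha))
    by_contra hne'
    have hne : J' ≠ I := by
      intro h
      apply hne'
      apply Finset.Subset.antisymm hsubS'
      intro x hx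
      have hxi : SAtom.ina x ∈ I := (hmemS' x).2 hx
      rw [← h] at hxi
      exact (memJ'ina x).1 hxi
    apply hMin J' hsub hne
    have hT : sigmaVal ⟨J', I, hsub⟩ .T = ∑ x ∈ S', x := by
      apply sigma_eq_sum
      intro ξ
      rw [term_T]
      refine my_if_congr ?_
      simp only [hmemS, hmemS']
      constructor
      · rintro ⟨_, h2⟩; exact h2
      · intro h; exact ⟨hS'S h, h⟩
    have hH : sigmaVal ⟨J', I, hsub⟩ .H = ∑ x ∈ S'', x := by
      apply sigma_eq_sum
      intro ξ
      rw [term_H]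
      refine my_if_congr ?_
      simp only [hmemS, hmemS', memJ'sa, memJ'ina]
      constructor
      · rintro ⟨h1, _, h3⟩; exact h3 h1
      · intro h; exact ⟨hsubS h, hsubS' h, fun _ => h⟩
    refine ⟨fun y hy => (memJ'sa y).2 hy, ?_, ?_⟩
    · intro w' _
      cases w'
      · rw [hH]; exact hl''
      · rw [hT]; exact hl'
    · intro w' _
      cases w'
      · rw [hH]; exact hu''
      · rw [hT]; exact hu'
  · rintro ⟨S', hS'S, ⟨hl', hu'⟩, hmin, rfl⟩
    set I : Set SAtom := (fun x => SAtom.sa x) '' ↑S ∪ (fun x => SAtom.ina x) '' ↑S'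
      with hIdef
    have hmemS : ∀ ξ, SAtom.sa ξ ∈ I ↔ ξ ∈ S := by intro ξ; simp [hIdef]
    have hmemS' : ∀ ξ, SAtom.ina ξ ∈ I ↔ ξ ∈ S' := by intro ξ; simp [hIdef]
    have hsum : ∀ w, sigmaVal ⟨I, I, le_refl I⟩ w = ∑ x ∈ S', x := by
      intro w
      apply sigma_eq_sum
      intro ξ
      cases w
      · rw [term_H]
        refine my_if_congr ?_
        simp only [hmemS, hmemS']
        constructor
        · rintro ⟨_, h2, _⟩; exact h2
        · intro h; exact ⟨hS'S h, h, fun _ => h⟩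
      · rw [term_T]
        refine my_if_congr ?_
        simp only [hmemS, hmemS']
        constructor
        · rintro ⟨_, h2⟩; exact h2
        · intro h; exact ⟨hS'S h, h⟩
    constructor
    · refine ⟨fun y hy => (hmemS y).2 hy, ?_, ?_⟩
      · intro w' _; rw [hsum w']; exact hl'
      · intro w' _; rw [hsum w']; exact hu'
    · intro J' hsub hne hps
      obtain ⟨hsat, hl2, hu2⟩ := hps
      have hsaJ' : ∀ y ∈ S, SAtom.sa y ∈ J' := hsat
      set S'' : Finset ℤ := S'.filter (fun x => SAtom.ina x ∈ J') with hS''def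
      have hS''sub : S'' ⊆ S' := Finset.filter_subset _ _
      have hH : sigmaVal ⟨J', I, hsub⟩ .H = ∑ x ∈ S'', x := by
        apply sigma_eq_sum
        intro ξ
        rw [term_H]
        refine my_if_congr ?_
        simp only [hmemS, hmemS']
        constructor
        · rintro ⟨h1, h2, h3⟩
          exact Finset.mem_filter.2 ⟨h2, h3 (hsaJ' ξ h1)⟩
        · intro h
          obtain ⟨h2, h3⟩ := Finset.mem_filter.1 h
          exact ⟨hS'S h2, h2, fun _ => h3⟩
      have hSeq : S'' = S' := by
        apply hmin S'' (hS''sub.trans hS'S) hS''sub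
        constructor
        · rw [← hH]; exact hl2 .H trivial
        · rw [← hH]; exact hu2 .H trivial
      apply hne
      apply Set.Subset.antisymm hsub
      intro a ha
      cases a with
      | sa x => exact hsaJ' x ((hmemS x).1 ha)
      | ina x =>
        have hx : x ∈ S' := (hmemS' x).1 ha
        rw [← hSeq] at hx
        exact (Finset.mem_filter.1 hx).2
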